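/- For every spherically convex body C ⊂ S², the thickness does not exceed the diameter: Δ(C) ≤ diam(C). -/

import Mathlib

open scoped RealInnerProductSpace
open Real Set

noncomputable section

abbrev E3 := EuclideanSpace ℝ (Fin 3)

/-- Geodesic (angular) distance on the unit sphere. -/
def sdist (x y : E3) : ℝ := Real.arccos ⟪x, y⟫

/-- The shorter great-circle arc joining `a` and `b` (as unit vectors in their
nonnegative cone). -/
def Arc (a b : E3) : Set E3 :=
  {z | ‖z‖ = 1 ∧ ∃ s t : ℝ, 0 ≤ s ∧ 0 ≤ t ∧ z = s • a + t • b}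

/-- Spherical convexity: a set of unit vectors, with no antipodal pair,
containing the minor arc between any two of its points. -/
def SphConvex (C : Set E3) : Prop :=
  (∀ x ∈ C, ‖x‖ = 1) ∧ (∀ x ∈ C, -x ∉ C) ∧
  ∀ x ∈ C, ∀ y ∈ C, Arc x y ⊆ C

/-- Interior relative to the unit sphere. -/
def sphInterior (C : Set E3) : Set E3 :=
  {x | ‖x‖ = 1 ∧ ∃ ε > 0, ∀ y : E3, ‖y‖ = 1 → sdist x y < ε → y ∈ C}

/-- A spherically convex body: closed, spherically convex, with nonempty
interior relative to the sphere. -/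
def IsBody (C : Set E3) : Prop :=
  SphConvex C ∧ IsClosed C ∧ (sphInterior C).Nonempty

/-- Boundary relative to the sphere (for closed sets on the sphere). -/
def sphBd (C : Set E3) : Set E3 := C \ sphInterior C

/-- Closed hemisphere with center `c`. -/
def Hemi (c : E3) : Set E3 := {x | ‖x‖ = 1 ∧ 0 ≤ ⟪c, x⟫}

/-- `g` and `h` are centers of two distinct non-opposite hemispheres. -/
def IsLunePair (g h : E3) : Prop := ‖g‖ = 1 ∧ ‖h‖ = 1 ∧ g ≠ h ∧ g ≠ -h

/-- The lune determined by hemispheres with centers `g` and `h`. -/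
def Lune (g h : E3) : Set E3 := Hemi g ∩ Hemi h

/-- The semicircle bounding `Lune g h` which is contained in `Hemi g`
(i.e. the half of the great circle bounding `Hemi h` lying in `Hemi g`). -/
def SemiIn (g h : E3) : Set E3 := {x | ‖x‖ = 1 ∧ ⟪h, x⟫ = 0 ∧ 0 ≤ ⟪g, x⟫}

/-- The center of the semicircle `SemiIn g h`. -/
def scCenter (g h : E3) : E3 := ‖g - ⟪h, g⟫ • h‖⁻¹ • (g - ⟪h, g⟫ • h)

/-- Thickness of the lune `Lune g h`: the distance between the centers of its
two bounding semicircles. -/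
def lThick (g h : E3) : ℝ := sdist (scCenter g h) (scCenter h g)

/-- The hemisphere with center `g` supports `C`. -/
def Supports (C : Set E3) (g : E3) : Prop :=
  ‖g‖ = 1 ∧ C ⊆ Hemi g ∧ ∃ p ∈ C, ⟪g, p⟫ = 0

/-- The width of `C` determined by a supporting hemisphere `Hemi g`. -/
def widthAt (C : Set E3) (g : E3) : ℝ :=
  sInf {w | ∃ h, Supports C h ∧ IsLunePair g h ∧ lThick g h = w}

/-- The thickness of a convex body `C`. -/
def thickness (C : Set E3) : ℝ :=
  sInf {w | ∃ g, Supports C g ∧ widthAt C g = w}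

/-- A reduced spherical convex body. -/
def Reduced (R : Set E3) : Prop :=
  IsBody R ∧ ∀ Z, IsBody Z → Z ⊆ R → Z ≠ R → thickness Z < thickness R

/-- Geodesic diameter of a set on the sphere. -/
def sDiam (A : Set E3) : ℝ := sSup {d | ∃ x ∈ A, ∃ y ∈ A, sdist x y = d}

/-- The set of extreme points of `C`. -/
def extremePts (C : Set E3) : Set E3 := {e ∈ C | SphConvex (C \ {e})}

/-- The spherical disk of center `c` and radius `ρ`. -/
def Disk (c : E3) (ρ : ℝ) : Set E3 := {x | ‖x‖ = 1 ∧ sdist c x ≤ ρ}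

/-- A quarter of a disk of radius `ρ`: the intersection of the disk with one of
the four quadrants determined by two orthogonal great circles through its
center. -/
def IsQuarterDisk (Q : Set E3) (ρ : ℝ) : Prop :=
  ∃ c u v : E3, ‖c‖ = 1 ∧ ‖u‖ = 1 ∧ ‖v‖ = 1 ∧
    ⟪u, v⟫ = 0 ∧ ⟪u, c⟫ = 0 ∧ ⟪v, c⟫ = 0 ∧
    Q = Disk c ρ ∩ {x | 0 ≤ ⟪u, x⟫} ∩ {x | 0 ≤ ⟪v, x⟫}

/-- A body of constant width. -/
def ConstWidth (C : Set E3) : Prop :=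
  IsBody C ∧ ∃ w, ∀ g, Supports C g → widthAt C g = w

/-- Spherical convex hull. -/
def sphHull (A : Set E3) : Set E3 := ⋂₀ {C | SphConvex C ∧ A ⊆ C}


section AuxLemmas

lemma unit_inner_self' {x : E3} (hx : ‖x‖ = 1) : ⟪x, x⟫ = 1 := by
  rw [real_inner_self_eq_norm_sq, hx, one_pow]

lemma abs_inner_le_one' {x y : E3} (hx : ‖x‖ = 1) (hy : ‖y‖ = 1) : |⟪x, y⟫| ≤ 1 := by
  have h := abs_real_inner_le_norm x y
  rwa [hx, hy, one_mul] at h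

lemma eq_neg_of_inner_eq_neg_one' {x y : E3} (hx : ‖x‖ = 1) (hy : ‖y‖ = 1)
    (h : ⟪x, y⟫ = -1) : y = -x := by
  have h0 : ⟪x + y, x + y⟫ = 0 := by
    rw [real_inner_add_add_self, unit_inner_self' hx, unit_inner_self' hy, h]; ring
  have h1 : x + y = 0 := inner_self_eq_zero.mp h0
  exact eq_neg_of_add_eq_zero_right h1

lemma eq_of_inner_eq_one' {x y : E3} (hx : ‖x‖ = 1) (hy : ‖y‖ = 1)
    (h : ⟪x, y⟫ = 1) : y = x := by
  have h0 : ⟪x - y, x - y⟫ = 0 := by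
    rw [real_inner_sub_sub_self, unit_inner_self' hx, unit_inner_self' hy, h]; ring
  have h1 : x - y = 0 := inner_self_eq_zero.mp h0
  exact (sub_eq_zero.mp h1).symm

lemma norm_combo {x u : E3} (hx : ‖x‖ = 1) (hu : ‖u‖ = 1) (hxu : ⟪x, u⟫ = 0)
    {c s : ℝ} (hcs : c ^ 2 + s ^ 2 = 1) : ‖c • x + s • u‖ = 1 := by
  have hux : ⟪u, x⟫ = 0 := by rw [real_inner_comm]; exact hxu
  have h1 : ⟪c • x + s • u, c • x + s • u⟫ = 1 := by
    simp only [inner_add_left, inner_add_right, real_inner_smul_left, real_inner_smul_right,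
      unit_inner_self' hx, unit_inner_self' hu, hxu, hux, mul_zero, mul_one, add_zero, zero_add]
    nlinarith [hcs]
  rw [norm_eq_sqrt_real_inner, h1, Real.sqrt_one]

lemma le_of_arccos_le {a b : ℝ} (ha : -1 ≤ a) (ha' : a ≤ 1) (hb : -1 ≤ b) (hb' : b ≤ 1)
    (h : Real.arccos a ≤ Real.arccos b) : b ≤ a := by
  have h1 : Real.cos (Real.arccos b) ≤ Real.cos (Real.arccos a) :=
    Real.cos_le_cos_of_nonneg_of_le_pi (Real.arccos_nonneg a) (Real.arccos_le_pi b) h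
  rwa [Real.cos_arccos ha ha', Real.cos_arccos hb hb'] at h1

end AuxLemmas


set_option maxHeartbeats 1000000 in
/-- Key lemma: if every point of `C` satisfies `⟪p,q⟫ ≤ ⟪q,z⟫`, then for every
`x ∈ C` we have `⟪p,q⟫ * ⟪p,x⟫ ≤ ⟪q,x⟫` (so the hemisphere orthogonal to `pq`
at `p`, pointing towards `q`, contains `C`). -/
lemma key_support (C : Set E3) (hC : SphConvex C) (p q x : E3)
    (hp : p ∈ C) (hx : x ∈ C)
    (H : ∀ z ∈ C, ⟪p, q⟫ ≤ ⟪q, z⟫) :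
    ⟪p, q⟫ * ⟪p, x⟫ ≤ ⟪q, x⟫ := by
  have hpu : ‖p‖ = 1 := hC.1 p hp
  have hxu : ‖x‖ = 1 := hC.1 x hx
  have haCS : |⟪p, x⟫| ≤ 1 := abs_inner_le_one' hpu hxu
  have ha1 : ⟪p, x⟫ ≤ 1 := (abs_le.mp haCS).2
  have ha2 : -1 ≤ ⟪p, x⟫ := (abs_le.mp haCS).1
  rcases eq_or_lt_of_le ha1 with h1 | h1
  · -- ⟪p,x⟫ = 1 : x = p
    have hxp : x = p := eq_of_inner_eq_one' hpu hxu h1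
    rw [hxp, unit_inner_self' hpu, real_inner_comm p q, mul_one]
  rcases eq_or_lt_of_le ha2 with h2 | h2
  · -- ⟪p,x⟫ = -1 : x = -p, impossible
    exfalso
    have hxp : x = -p := eq_neg_of_inner_eq_neg_one' hpu hxu h2.symm
    exact hC.2.1 p hp (hxp ▸ hx)
  set t := ⟪p, q⟫ with htdef
  set a := ⟪p, x⟫ with hadef
  have hs2 : Real.sqrt (1 - a ^ 2) ^ 2 = 1 - a ^ 2 := Real.sq_sqrt (by nlinarith)
  set s := Real.sqrt (1 - a ^ 2) with hsdef
  have hs_pos : 0 < s := Real.sqrt_pos.mpr (by nlinarith)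
  have hsne : s ≠ 0 := ne_of_gt hs_pos
  set u := s⁻¹ • (x - a • p) with hu
  have hdecomp : x = a • p + s • u := by
    rw [hu, smul_smul, mul_inv_cancel₀ hsne, one_smul]
    abel
  have hpu0 : ⟪p, u⟫ = 0 := by
    rw [hu, real_inner_smul_right, inner_sub_right, real_inner_smul_right,
      unit_inner_self' hpu, ← hadef]
    ring
  have huu : ‖u‖ = 1 := by
    have hnorm : ⟪x - a • p, x - a • p⟫ = 1 - a ^ 2 := by
      rw [real_inner_sub_sub_self, real_inner_smul_right, real_inner_smul_left,
        real_inner_smul_right, unit_inner_self' hpu, unit_inner_self' hxu,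
        real_inner_comm p x, ← hadef]
      ring
    have hnn : ‖x - a • p‖ = s := by
      rw [norm_eq_sqrt_real_inner, hnorm, hsdef]
    rw [hu, norm_smul, norm_inv, Real.norm_eq_abs, abs_of_pos hs_pos, hnn,
      inv_mul_cancel₀ hsne]
  have hqx : ⟪q, x⟫ = a * t + s * ⟪q, u⟫ := by
    conv_lhs => rw [hdecomp]
    rw [inner_add_right, real_inner_smul_right, real_inner_smul_right,
      real_inner_comm p q, ← htdef]
  have hqu : 0 ≤ ⟪q, u⟫ := by
    by_contra hneg
    push_neg at hneg
    set δ := -⟪q, u⟫ with hδ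
    have hδpos : 0 < δ := by rw [hδ]; linarith
    set θ := min (min 1 (s / 2)) (δ / (|t| + 1)) with hθdef
    have hθpos : 0 < θ := by
      apply lt_min (lt_min one_pos (by linarith))
      positivity
    have hθ1 : θ ≤ 1 := le_trans (min_le_left _ _) (min_le_left _ _)
    have hθs : θ ≤ s / 2 := le_trans (min_le_left _ _) (min_le_right _ _)
    have hθδ : θ ≤ δ / (|t| + 1) := min_le_right _ _
    have hθπ : θ < π := lt_of_le_of_lt hθ1 (by linarith [Real.pi_gt_three])
    have hsin_pos : 0 < Real.sin θ := Real.sin_pos_of_pos_of_lt_pi hθpos hθπ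
    have hsin_le : Real.sin θ ≤ θ := Real.sin_le hθpos.le
    have hsin_ge : θ / 2 ≤ Real.sin θ := by
      have h := Real.sin_gt_sub_cube hθpos
      have h3 : θ ^ 3 ≤ θ := by nlinarith [mul_pos hθpos hθpos]
      linarith
    have hcos_ge : 1 - θ ^ 2 / 2 ≤ Real.cos θ := Real.one_sub_sq_div_two_le_cos
    have hcos_half : 1 / 2 ≤ Real.cos θ := by nlinarith
    have hcos_le1 : Real.cos θ ≤ 1 := Real.cos_le_one θ
    have hcoef : 0 ≤ Real.cos θ - a * (Real.sin θ / s) := by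
      rw [sub_nonneg, mul_div_assoc', div_le_iff₀ hs_pos]
      calc a * Real.sin θ ≤ Real.sin θ := by nlinarith
        _ ≤ s / 2 := by linarith
        _ ≤ Real.cos θ * s := by nlinarith
    set z := Real.cos θ • p + Real.sin θ • u with hz
    have hznorm : ‖z‖ = 1 :=
      norm_combo hpu huu hpu0 (by linear_combination Real.sin_sq_add_cos_sq θ)
    have hzarc : z ∈ Arc p x := by
      refine ⟨hznorm, Real.cos θ - a * (Real.sin θ / s), Real.sin θ / s, hcoef,
        by positivity, ?_⟩
      rw [hz]
      conv_rhs => rw [hdecomp]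
      match_scalars <;> field_simp <;> ring
    have hzC : z ∈ C := hC.2.2 p hp x hx hzarc
    have hHz := H z hzC
    have hqz : ⟪q, z⟫ = Real.cos θ * t + Real.sin θ * ⟪q, u⟫ := by
      rw [hz, inner_add_right, real_inner_smul_right, real_inner_smul_right,
        real_inner_comm p q, ← htdef]
    rw [hqz] at hHz
    have hquδ : ⟪q, u⟫ = -δ := by rw [hδ]; ring
    rw [hquδ] at hHz
    -- hHz : t ≤ cos θ * t + sin θ * (-δ)
    have hAA : Real.sin θ * δ ≤ |t| * (θ ^ 2 / 2) := by
      nlinarith [neg_abs_le t, le_abs_self t,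
        mul_nonneg (by linarith : (0:ℝ) ≤ 1 - Real.cos θ)
          (by linarith [neg_abs_le t] : 0 ≤ |t| + t)]
    have hA : θ * δ ≤ |t| * θ ^ 2 := by
      nlinarith [mul_le_mul_of_nonneg_right hsin_ge hδpos.le]
    have hB : θ * (|t| + 1) ≤ δ := (le_div_iff₀ (by positivity)).mp hθδ
    nlinarith [mul_le_mul_of_nonneg_left hB hθpos.le, mul_pos hθpos hθpos]
  rw [hqx]
  nlinarith [mul_nonneg hs_pos.le hqu]

set_option maxHeartbeats 1000000 in
/-- For every spherically convex body `C`, `Δ(C) ≤ diam(C)`. -/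
theorem stmt18 (C : Set E3) (hC : IsBody C) :
    thickness C ≤ sDiam C := by
  obtain ⟨hconv, hclosed, x₀, hx₀⟩ := hC
  obtain ⟨hx₀u, ε, hεpos, hball⟩ := hx₀
  have hx₀C : x₀ ∈ C := hball x₀ hx₀u (by
    rw [sdist, unit_inner_self' hx₀u, Real.arccos_one]; exact hεpos)
  -- a second point of C
  have hx₀ne : x₀ ≠ 0 := fun h => by simp [h] at hx₀u
  obtain ⟨v, hvmem, hvne⟩ : ∃ v ∈ (ℝ ∙ x₀)ᗮ, v ≠ 0 := by
    by_contra hcon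
    push_neg at hcon
    have hbot : (ℝ ∙ x₀)ᗮ = ⊥ := by
      rw [Submodule.eq_bot_iff]; exact hcon
    have h1 : Module.finrank ℝ (ℝ ∙ x₀) = 1 := finrank_span_singleton hx₀ne
    have h2 := Submodule.finrank_add_finrank_orthogonal (K := ℝ ∙ x₀)
    rw [hbot, h1, finrank_bot] at h2
    simp [finrank_euclideanSpace] at h2
  have hvx : ⟪x₀, v⟫ = 0 :=
    (Submodule.mem_orthogonal _ v).mp hvmem x₀ (Submodule.mem_span_singleton_self x₀)
  set u0 := ‖v‖⁻¹ • v with hu0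
  have hu0n : ‖u0‖ = 1 := by
    rw [hu0, norm_smul, norm_inv, norm_norm, inv_mul_cancel₀ (norm_ne_zero_iff.mpr hvne)]
  have hu0x : ⟪x₀, u0⟫ = 0 := by rw [hu0, real_inner_smul_right, hvx, mul_zero]
  set θ₀ := min (ε / 2) 1 with hθ₀
  have hθ₀pos : 0 < θ₀ := lt_min (by linarith) one_pos
  have hθ₀le : θ₀ ≤ 1 := min_le_right _ _
  have hθ₀ltπ : θ₀ < π := lt_of_le_of_lt hθ₀le (by linarith [Real.pi_gt_three])
  set y₀ := Real.cos θ₀ • x₀ + Real.sin θ₀ • u0 with hy₀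
  have hy₀n : ‖y₀‖ = 1 :=
    norm_combo hx₀u hu0n hu0x (by linear_combination Real.sin_sq_add_cos_sq θ₀)
  have hxy₀ : ⟪x₀, y₀⟫ = Real.cos θ₀ := by
    rw [hy₀, inner_add_right, real_inner_smul_right, real_inner_smul_right,
      unit_inner_self' hx₀u, hu0x]; ring
  have hsd : sdist x₀ y₀ = θ₀ := by
    rw [sdist, hxy₀, Real.arccos_cos hθ₀pos.le hθ₀ltπ.le]
  have hy₀C : y₀ ∈ C := hball y₀ hy₀n (by rw [hsd]; linarith [min_le_left (ε / 2) 1])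
  -- compactness : attain the diameter
  have hCb : Bornology.IsBounded C :=
    isBounded_iff_forall_norm_le.mpr ⟨1, fun x hx => le_of_eq (hconv.1 x hx)⟩
  have hCcpt : IsCompact C := Metric.isCompact_of_isClosed_isBounded hclosed hCb
  have hcont : ContinuousOn (fun z : E3 × E3 => sdist z.1 z.2) (C ×ˢ C) :=
    (Real.continuous_arccos.comp continuous_inner).continuousOn
  obtain ⟨⟨p, q⟩, hpqmem, hmax'⟩ :=
    (hCcpt.prod hCcpt).exists_isMaxOn ⟨(x₀, x₀), Set.mk_mem_prod hx₀C hx₀C⟩ hcont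
  have hp : p ∈ C := hpqmem.1
  have hq : q ∈ C := hpqmem.2
  have hmax : ∀ x ∈ C, ∀ y ∈ C, sdist x y ≤ sdist p q := fun x hx y hy =>
    isMaxOn_iff.mp hmax' (x, y) (Set.mk_mem_prod hx hy)
  have hpn : ‖p‖ = 1 := hconv.1 p hp
  have hqn : ‖q‖ = 1 := hconv.1 q hq
  set t := ⟪p, q⟫ with htdef
  have htCS : |t| ≤ 1 := abs_inner_le_one' hpn hqn
  have ht1 : t ≤ 1 := (abs_le.mp htCS).2
  have ht2 : -1 ≤ t := (abs_le.mp htCS).1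
  have hspq : sdist p q = Real.arccos t := by rw [sdist]
  have htlt : t < 1 := by
    rcases lt_or_eq_of_le ht1 with hlt | heq
    · exact hlt
    · exfalso
      have h0 := hmax x₀ hx₀C y₀ hy₀C
      rw [hsd, hspq, heq, Real.arccos_one] at h0
      linarith
  have htgt : -1 < t := by
    rcases lt_or_eq_of_le ht2 with hlt | heq
    · exact hlt
    · exfalso
      have hqp : q = -p := eq_neg_of_inner_eq_neg_one' hpn hqn (htdef ▸ heq.symm)
      exact hconv.2.1 p hp (hqp ▸ hq)
  have hPx : ∀ x ∈ C, t ≤ ⟪p, x⟫ := by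
    intro x hx
    have h0 := hmax p hp x hx
    rw [hspq, sdist] at h0
    have hxn := hconv.1 x hx
    have hCS := abs_le.mp (abs_inner_le_one' hpn hxn)
    exact le_of_arccos_le hCS.1 hCS.2 ht2 ht1 h0
  have hQx : ∀ x ∈ C, t ≤ ⟪q, x⟫ := by
    intro x hx
    have h0 := hmax q hq x hx
    rw [hspq, sdist] at h0
    have hxn := hconv.1 x hx
    have hCS := abs_le.mp (abs_inner_le_one' hqn hxn)
    exact le_of_arccos_le hCS.1 hCS.2 ht2 ht1 h0
  -- the two hemispheres orthogonal to pq at p and q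
  have hs2 : Real.sqrt (1 - t ^ 2) ^ 2 = 1 - t ^ 2 := Real.sq_sqrt (by nlinarith)
  set s := Real.sqrt (1 - t ^ 2) with hsdef
  have hs_pos : 0 < s := Real.sqrt_pos.mpr (by nlinarith)
  have hsne : s ≠ 0 := ne_of_gt hs_pos
  set g := s⁻¹ • (q - t • p) with hg
  set h := s⁻¹ • (p - t • q) with hh
  have hqp' : ⟪q, p⟫ = t := by rw [real_inner_comm p q]
  have hgn : ‖g‖ = 1 := by
    have hin : ⟪q - t • p, q - t • p⟫ = 1 - t ^ 2 := by
      rw [real_inner_sub_sub_self, real_inner_smul_right, real_inner_smul_left,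
        real_inner_smul_right, unit_inner_self' hpn, unit_inner_self' hqn, hqp']
      ring
    rw [hg, norm_smul, norm_inv, Real.norm_eq_abs, abs_of_pos hs_pos,
      norm_eq_sqrt_real_inner, hin, ← hsdef, inv_mul_cancel₀ hsne]
  have hhn : ‖h‖ = 1 := by
    have hin : ⟪p - t • q, p - t • q⟫ = 1 - t ^ 2 := by
      rw [real_inner_sub_sub_self, real_inner_smul_right, real_inner_smul_left,
        real_inner_smul_right, unit_inner_self' hpn, unit_inner_self' hqn, ← htdef]
      ring
    rw [hh, norm_smul, norm_inv, Real.norm_eq_abs, abs_of_pos hs_pos,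
      norm_eq_sqrt_real_inner, hin, ← hsdef, inv_mul_cancel₀ hsne]
  have hginner : ∀ x : E3, ⟪g, x⟫ = s⁻¹ * (⟪q, x⟫ - t * ⟪p, x⟫) := by
    intro x
    rw [hg, real_inner_smul_left, inner_sub_left, real_inner_smul_left]
  have hhinner : ∀ x : E3, ⟪h, x⟫ = s⁻¹ * (⟪p, x⟫ - t * ⟪q, x⟫) := by
    intro x
    rw [hh, real_inner_smul_left, inner_sub_left, real_inner_smul_left]
  have hgsupp : Supports C g := by
    refine ⟨hgn, fun x hx => ⟨hconv.1 x hx, ?_⟩, p, hp, ?_⟩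
    · rw [hginner]
      have hkey := key_support C hconv p q x hp hx (fun z hz => hQx z hz)
      exact mul_nonneg (inv_nonneg.mpr hs_pos.le) (by linarith)
    · rw [hginner, unit_inner_self' hpn, hqp']; ring
  have hhsupp : Supports C h := by
    refine ⟨hhn, fun x hx => ⟨hconv.1 x hx, ?_⟩, q, hq, ?_⟩
    · rw [hhinner]
      have hkey := key_support C hconv q p x hq hx
        (fun z hz => by rw [hqp']; exact hPx z hz)
      rw [hqp'] at hkey
      exact mul_nonneg (inv_nonneg.mpr hs_pos.le) (by linarith)
    · rw [hhinner, unit_inner_self' hqn, ← htdef]; ring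
  -- inner products among p, q, g, h
  have hqh : ⟪q, h⟫ = 0 := by
    rw [hh, real_inner_smul_right, inner_sub_right, real_inner_smul_right,
      unit_inner_self' hqn, hqp']
    ring
  have hph : ⟪p, h⟫ = s := by
    rw [hh, real_inner_smul_right, inner_sub_right, real_inner_smul_right,
      unit_inner_self' hpn, ← htdef]
    field_simp
    linear_combination -hs2
  have hpg : ⟪p, g⟫ = 0 := by
    rw [hg, real_inner_smul_right, inner_sub_right, real_inner_smul_right,
      unit_inner_self' hpn, ← htdef]
    ring
  have hqg : ⟪q, g⟫ = s := by
    rw [hg, real_inner_smul_right, inner_sub_right, real_inner_smul_right,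
      unit_inner_self' hqn, hqp']
    field_simp
    linear_combination -hs2
  have hgh : ⟪g, h⟫ = -t := by
    rw [hginner h, hqh, hph]
    field_simp
    ring
  have hhg : ⟪h, g⟫ = -t := by rw [real_inner_comm g h, hgh]
  -- lune pair
  have hlune : IsLunePair g h := by
    refine ⟨hgn, hhn, ?_, ?_⟩
    · intro he
      rw [he, unit_inner_self' hhn] at hgh
      linarith
    · intro he
      rw [he, inner_neg_left, unit_inner_self' hhn] at hgh
      linarith
  -- the centers of the two semicircles of the lune are q and p
  have hc1 : scCenter g h = q := by
    have hexp : g - ⟪h, g⟫ • h = s • q := by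
      rw [hhg, hg, hh]
      match_scalars
      · field_simp
        linear_combination -hs2
      · field_simp
        ring
    rw [scCenter, hexp, norm_smul, Real.norm_eq_abs, abs_of_pos hs_pos, hqn, mul_one,
      smul_smul, inv_mul_cancel₀ hsne, one_smul]
  have hc2 : scCenter h g = p := by
    have hexp : h - ⟪g, h⟫ • g = s • p := by
      rw [hgh, hg, hh]
      match_scalars
      · field_simp
        linear_combination -hs2
      · field_simp
        ring
    rw [scCenter, hexp, norm_smul, Real.norm_eq_abs, abs_of_pos hs_pos, hpn, mul_one,
      smul_smul, inv_mul_cancel₀ hsne, one_smul]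
  have hlthick : lThick g h = Real.arccos t := by
    rw [lThick, hc1, hc2, sdist, hqp']
  -- assemble the chain of inequalities
  have hbddT : BddBelow {w | ∃ h', Supports C h' ∧ IsLunePair g h' ∧ lThick g h' = w} := by
    refine ⟨0, fun w hw => ?_⟩
    obtain ⟨h', _, _, hw⟩ := hw
    rw [← hw, lThick, sdist]
    exact Real.arccos_nonneg _
  have hwidth : widthAt C g ≤ Real.arccos t := by
    rw [widthAt]
    exact csInf_le hbddT ⟨h, hhsupp, hlune, hlthick⟩
  have hbddS : BddBelow {w | ∃ g', Supports C g' ∧ widthAt C g' = w} := by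
    refine ⟨0, fun w hw => ?_⟩
    obtain ⟨g', _, hw⟩ := hw
    rw [← hw, widthAt]
    apply Real.sInf_nonneg
    rintro w' ⟨h', _, _, hw'⟩
    rw [← hw', lThick, sdist]
    exact Real.arccos_nonneg _
  have hthick : thickness C ≤ widthAt C g := by
    rw [thickness]
    exact csInf_le hbddS ⟨g, hgsupp, rfl⟩
  have hdiam : Real.arccos t ≤ sDiam C := by
    rw [sDiam]
    apply le_csSup
    · refine ⟨π, fun w hw => ?_⟩
      obtain ⟨x, _, y, _, hw⟩ := hw
      rw [← hw, sdist]
      exact Real.arccos_le_pi _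
    · exact ⟨p, hp, q, hq, hspq.symm ▸ rfl⟩
  linarith
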